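/- Stabilised inf-sup condition (Lemma 2.1): There exists a constant C > 0, depending only on β, M_b, C_F and C_π, such that every λ_h ∈ Λ_h satisfies ‖λ_h‖_L ≤ C · ( sup over v_h ∈ V_h with v_h ≠ 0 of b(λ_h, v_h)/‖v_h‖_V + ‖λ_h − π_L λ_h‖_{L_h} ). -/
import Mathlib


/-- **Stabilised inf-sup condition (Lemma 2.1).**
There exists a constant `C > 0` (depending only on `β`, `M_b`, `C_F`, `C_π`) such that
every `λ_h ∈ Λ_h` satisfies
`‖λ_h‖_L ≤ C (sup_{v_h ∈ V_h, v_h ≠ 0} b(λ_h, v_h)/‖v_h‖_V + ‖λ_h − π_L λ_h‖_{L_h})`. -/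
theorem stabilised_inf_sup
    {V L : Type*} [NormedAddCommGroup V] [NormedSpace ℝ V]
    [NormedAddCommGroup L] [NormedSpace ℝ L]
    -- bilinear form b and its continuity
    (b : L →ₗ[ℝ] V →ₗ[ℝ] ℝ)
    (Mb : ℝ) (hMb : 0 < Mb)
    (hb_cont : ∀ (lam : L) (v : V), |b lam v| ≤ Mb * ‖lam‖ * ‖v‖)
    -- continuous inf-sup condition
    (β : ℝ) (hβ : 0 < β)
    (h_infsup : ∀ lam : L, β * ‖lam‖ ≤ ⨆ v : {v : V // v ≠ 0}, b lam v.1 / ‖v.1‖)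
    -- discrete subspaces
    (Vh : Submodule ℝ V) (Lh Λh : Submodule ℝ L)
    -- discrete norm on the subspace L_h + Λ_h
    (nLh : L → ℝ)
    (hnLh_nonneg : ∀ x ∈ Lh ⊔ Λh, 0 ≤ nLh x)
    (hnLh_def : ∀ x ∈ Lh ⊔ Λh, nLh x = 0 → x = 0)
    (hnLh_add : ∀ x ∈ Lh ⊔ Λh, ∀ y ∈ Lh ⊔ Λh, nLh (x + y) ≤ nLh x + nLh y)
    (hnLh_smul : ∀ (r : ℝ), ∀ x ∈ Lh ⊔ Λh, nLh (r • x) = |r| * nLh x)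
    -- Fortin operator
    (πF : V →ₗ[ℝ] V) (hπF_mem : ∀ v : V, πF v ∈ Vh)
    (hπF_orth : ∀ μ ∈ Lh, ∀ v : V, b μ (v - πF v) = 0)
    (CF : ℝ) (hCF : 0 < CF)
    (hπF_stab : ∀ v : V, ‖πF v‖ ≤ CF * ‖v‖)
    -- stabilising projection π_L : Λ_h → L_h
    (πL : L →ₗ[ℝ] L) (hπL_mem : ∀ x ∈ Λh, πL x ∈ Lh)
    (Cπ : ℝ) (hCπ : 0 < Cπ)
    (hπL_cont : ∀ x ∈ Λh, ∀ v : V, |b (x - πL x) v| ≤ Cπ * nLh (x - πL x) * ‖v‖) :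
    ∃ C > 0, ∀ lam ∈ Λh,
      ‖lam‖ ≤ C * ((⨆ v : {v : V // v ∈ Vh ∧ v ≠ 0}, b lam v.1 / ‖v.1‖)
        + nLh (lam - πL lam)) := by
  refine ⟨(CF + Cπ * (1 + CF)) / β, by positivity, ?_⟩
  intro lam hlam
  set S := ⨆ v : {v : V // v ∈ Vh ∧ v ≠ 0}, b lam v.1 / ‖v.1‖ with hS
  set n := nLh (lam - πL lam) with hn_def
  have hmem : lam - πL lam ∈ Lh ⊔ Λh :=
    Submodule.sub_mem _ (Submodule.mem_sup_right hlam)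
      (Submodule.mem_sup_left (hπL_mem lam hlam))
  have hn : 0 ≤ n := hnLh_nonneg _ hmem
  have hbdd : BddAbove (Set.range fun v : {v : V // v ∈ Vh ∧ v ≠ 0} => b lam v.1 / ‖v.1‖) := by
    refine ⟨Mb * ‖lam‖, ?_⟩
    rintro x ⟨v, rfl⟩
    have hv : (0:ℝ) < ‖v.1‖ := norm_pos_iff.mpr v.2.2
    rw [div_le_iff₀ hv]
    exact le_trans (le_abs_self _) (hb_cont lam v.1)
  have hSnn : 0 ≤ S := by
    by_cases hne : Nonempty {v : V // v ∈ Vh ∧ v ≠ 0}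
    · obtain ⟨v⟩ := hne
      have h1 := le_ciSup hbdd v
      have hv' : (-v.1) ∈ Vh ∧ (-v.1) ≠ 0 := ⟨Vh.neg_mem v.2.1, neg_ne_zero.mpr v.2.2⟩
      have h2 := le_ciSup hbdd ⟨-v.1, hv'⟩
      simp only [map_neg, norm_neg, neg_div] at h2
      rw [← hS] at h1 h2
      linarith
    · haveI := not_nonempty_iff.mp hne
      simp [hS, Real.iSup_of_isEmpty]
  have key : β * ‖lam‖ ≤ CF * S + Cπ * (1 + CF) * n := by
    refine le_trans (h_infsup lam) (Real.iSup_le ?_ (by positivity))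
    intro v
    have hv : (0:ℝ) < ‖v.1‖ := norm_pos_iff.mpr v.2
    rw [div_le_iff₀ hv]
    have decomp : b lam v.1 = b lam (πF v.1) + b (lam - πL lam) (v.1 - πF v.1) := by
      have horth := hπF_orth (πL lam) (hπL_mem lam hlam) v.1
      simp only [map_sub, LinearMap.sub_apply] at horth ⊢
      linarith
    have term1 : b lam (πF v.1) ≤ CF * S * ‖v.1‖ := by
      by_cases hz : πF v.1 = 0
      · simp only [hz, map_zero]
        positivity
      · have h1 : b lam (πF v.1) / ‖πF v.1‖ ≤ S :=
          le_ciSup hbdd ⟨πF v.1, hπF_mem v.1, hz⟩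
        have hp : (0:ℝ) < ‖πF v.1‖ := norm_pos_iff.mpr hz
        calc b lam (πF v.1) ≤ S * ‖πF v.1‖ := by
              rw [← div_le_iff₀ hp] at *; linarith [h1]
          _ ≤ S * (CF * ‖v.1‖) := mul_le_mul_of_nonneg_left (hπF_stab v.1) hSnn
          _ = CF * S * ‖v.1‖ := by ring
    have term2 : b (lam - πL lam) (v.1 - πF v.1) ≤ Cπ * (1 + CF) * n * ‖v.1‖ := by
      have hb1 := hπL_cont lam hlam (v.1 - πF v.1)
      have hnorm : ‖v.1 - πF v.1‖ ≤ (1 + CF) * ‖v.1‖ := by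
        calc ‖v.1 - πF v.1‖ ≤ ‖v.1‖ + ‖πF v.1‖ := norm_sub_le _ _
          _ ≤ ‖v.1‖ + CF * ‖v.1‖ := by linarith [hπF_stab v.1]
          _ = (1 + CF) * ‖v.1‖ := by ring
      calc b (lam - πL lam) (v.1 - πF v.1) ≤ |b (lam - πL lam) (v.1 - πF v.1)| := le_abs_self _
        _ ≤ Cπ * n * ‖v.1 - πF v.1‖ := hb1
        _ ≤ Cπ * n * ((1 + CF) * ‖v.1‖) :=
            mul_le_mul_of_nonneg_left hnorm (by positivity)
        _ = Cπ * (1 + CF) * n * ‖v.1‖ := by ring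
    calc b lam v.1 = b lam (πF v.1) + b (lam - πL lam) (v.1 - πF v.1) := decomp
      _ ≤ CF * S * ‖v.1‖ + Cπ * (1 + CF) * n * ‖v.1‖ := add_le_add term1 term2
      _ = (CF * S + Cπ * (1 + CF) * n) * ‖v.1‖ := by ring
  rw [div_mul_eq_mul_div, le_div_iff₀ hβ]
  have h1 : 0 ≤ CF * n := mul_nonneg hCF.le hn
  have h2 : 0 ≤ Cπ * (1 + CF) * S := mul_nonneg (by positivity) hSnn
  nlinarith [key]
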